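/- Let φ(x,y) = (4-x²+y²)/(4y) and let F(x,y) = (2x²/(4-y²), y + x²y/(4-y²)). Then φ(F(x,y)) = φ(x,y) wherever both sides are defined. That is, φ is a rational first integral for F. -/
import Mathlib


/-- φ is a rational first integral for F. -/
theorem phi_first_integral_F (x y : ℝ) (hy0 : y ≠ 0) (hy : y ^ 2 ≠ 4)
    (hy' : y + x ^ 2 * y / (4 - y ^ 2) ≠ 0) :
    (4 - (2 * x ^ 2 / (4 - y ^ 2)) ^ 2 + (y + x ^ 2 * y / (4 - y ^ 2)) ^ 2)
        / (4 * (y + x ^ 2 * y / (4 - y ^ 2)))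
      = (4 - x ^ 2 + y ^ 2) / (4 * y) := by
  have h4 : (4 : ℝ) - y ^ 2 ≠ 0 := by intro h; apply hy; linarith
  rw [div_eq_div_iff (by positivity) (by positivity)]
  field_simp
  ring
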